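/- For x, y > 0, AG(x,y) ≤ L_{3/2}(x,y), where L_{3/2}(x,y) = L(x^{3/2}, y^{3/2})^{2/3}. -/

import Mathlib

open Real Filter Topology

noncomputable def agmSeq (x y : ℝ) : ℕ → ℝ × ℝ
  | 0 => (x, y)
  | n+1 => (((agmSeq x y n).1 + (agmSeq x y n).2)/2,
      Real.sqrt ((agmSeq x y n).1 * (agmSeq x y n).2))

noncomputable def AG (x y : ℝ) : ℝ :=
  limUnder Filter.atTop fun n => (agmSeq x y n).1

noncomputable def Lmean (x y : ℝ) : ℝ :=
  if x = y then x else (x - y) / Real.log (x / y)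

lemma nonneg_of_derivAux {f f' : ℝ → ℝ} (hd : ∀ x ∈ Set.Ici (1:ℝ), HasDerivAt f (f' x) x)
    (h0 : f 1 = 0) (h' : ∀ x ∈ Set.Ici (1:ℝ), 0 ≤ f' x) {t : ℝ} (ht : 1 ≤ t) : 0 ≤ f t := by
  have hmono : MonotoneOn f (Set.Ici 1) := by
    apply monotoneOn_of_deriv_nonneg (convex_Ici 1)
    · exact fun x hx => (hd x hx).continuousAt.continuousWithinAt
    · intro x hx
      rw [interior_Ici] at hx
      exact ((hd x (Set.mem_Ici.mpr (le_of_lt hx))).differentiableAt).differentiableWithinAt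
    · intro x hx
      rw [interior_Ici] at hx
      rw [(hd x (Set.mem_Ici.mpr (le_of_lt hx))).deriv]
      exact h' x (Set.mem_Ici.mpr (le_of_lt hx))
  have := hmono (Set.self_mem_Ici) (Set.mem_Ici.mpr ht) ht
  linarith [h0 ▸ this]

lemma lin_log {τ : ℝ} (hτ : 1 ≤ τ) : 8*(τ^3-1)/(3*(τ+1)^3) ≤ Real.log τ := by
  have key : 0 ≤ Real.log τ - 8*(τ^3-1)/(3*(τ+1)^3) := by
    apply nonneg_of_derivAux (f' := fun x => 1/x -
      ((24*x^2)*(3*(x+1)^3) - (8*(x^3-1))*(9*(x+1)^2))/(3*(x+1)^3)^2) (ht := hτ)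
    · intro x hx
      simp only [Set.mem_Ici] at hx
      have hx0 : (0:ℝ) < x := lt_of_lt_of_le one_pos hx
      have hden : (3*(x+1)^3) ≠ 0 := by positivity
      have hnum : HasDerivAt (fun x : ℝ => 8*(x^3-1)) (24*x^2) x := by
        have H := ((hasDerivAt_pow 3 x).sub_const (1:ℝ)).const_mul (8:ℝ)
        exact H.congr_deriv (by push_cast; ring)
      have hden' : HasDerivAt (fun x : ℝ => 3*(x+1)^3) (9*(x+1)^2) x := by
        have H := (((hasDerivAt_id' x).add_const (1:ℝ)).pow 3).const_mul (3:ℝ)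
        exact H.congr_deriv (by push_cast; ring)
      have hlog : HasDerivAt Real.log (1/x) x := by
        simpa [one_div] using Real.hasDerivAt_log (ne_of_gt hx0)
      exact hlog.sub (hnum.div hden' hden)
    · norm_num
    · intro x hx
      simp only [Set.mem_Ici] at hx
      have hx0 : (0:ℝ) < x := lt_of_lt_of_le one_pos hx
      have h1 : (0:ℝ) < x + 1 := by linarith
      rw [sub_nonneg, div_le_div_iff₀ (by positivity) hx0]
      have hpos : 0 ≤ 9*(x+1)^2*(x-1)^4 := by positivity
      nlinarith [hpos]
  linarith

lemma log_le_lobatto {t : ℝ} (ht : 1 ≤ t) :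
    Real.log t ≤ (t^4+28*t^3-28*t-1)/(12*t^3+36*t^2+12*t) := by
  have key : 0 ≤ (fun t : ℝ => (t^4+28*t^3-28*t-1)/(12*t^3+36*t^2+12*t) - Real.log t) t := by
    apply nonneg_of_derivAux (f' := fun x =>
      ((4*x^3+84*x^2-28)*(12*x^3+36*x^2+12*x) - (x^4+28*x^3-28*x-1)*(36*x^2+72*x+12))
        /(12*x^3+36*x^2+12*x)^2 - 1/x) (ht := ht)
    · intro x hx
      simp only [Set.mem_Ici] at hx
      have hx0 : (0:ℝ) < x := lt_of_lt_of_le one_pos hx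
      have hden : (12*x^3+36*x^2+12*x) ≠ 0 := by positivity
      have hnum : HasDerivAt (fun x : ℝ => x^4+28*x^3-28*x-1) (4*x^3+84*x^2-28) x := by
        have H := (((hasDerivAt_pow 4 x).add ((hasDerivAt_pow 3 x).const_mul 28)).sub
            ((hasDerivAt_id' x).const_mul 28)).sub_const (1:ℝ)
        exact H.congr_deriv (by push_cast; ring)
      have hden' : HasDerivAt (fun x : ℝ => 12*x^3+36*x^2+12*x) (36*x^2+72*x+12) x := by
        have H := (((hasDerivAt_pow 3 x).const_mul 12).add ((hasDerivAt_pow 2 x).const_mul 36)).add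
            ((hasDerivAt_id' x).const_mul 12)
        exact H.congr_deriv (by push_cast; ring)
      have hlog : HasDerivAt Real.log (1/x) x := by
        simpa [one_div] using Real.hasDerivAt_log (ne_of_gt hx0)
      exact (hnum.div hden' hden).sub hlog
    · norm_num
    · intro x hx
      simp only [Set.mem_Ici] at hx
      have hx0 : (0:ℝ) < x := lt_of_lt_of_le one_pos hx
      rw [sub_nonneg, div_le_div_iff₀ hx0 (by positivity)]
      have hpos : 0 ≤ 12*x*(x-1)^6 := by positivity
      nlinarith [hpos]
  linarith [key]

lemma gauss_le_log {t : ℝ} (ht : 1 ≤ t) : 3*(t^2-1)/(t^2+4*t+1) ≤ Real.log t := by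
  have key : 0 ≤ (fun t : ℝ => Real.log t - (3*t^2-3)/(t^2+4*t+1)) t := by
    apply nonneg_of_derivAux (f' := fun x =>
      1/x - ((6*x)*(x^2+4*x+1) - (3*x^2-3)*(2*x+4))/(x^2+4*x+1)^2) (ht := ht)
    · intro x hx
      simp only [Set.mem_Ici] at hx
      have hx0 : (0:ℝ) < x := lt_of_lt_of_le one_pos hx
      have hden : (x^2+4*x+1) ≠ 0 := by positivity
      have hnum : HasDerivAt (fun x : ℝ => 3*x^2-3) (6*x) x := by
        have H := ((hasDerivAt_pow 2 x).const_mul 3).sub_const (3:ℝ)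
        exact H.congr_deriv (by push_cast; ring)
      have hden' : HasDerivAt (fun x : ℝ => x^2+4*x+1) (2*x+4) x := by
        have H := ((hasDerivAt_pow 2 x).add ((hasDerivAt_id' x).const_mul 4)).add_const (1:ℝ)
        exact H.congr_deriv (by push_cast; ring)
      have hlog : HasDerivAt Real.log (1/x) x := by
        simpa [one_div] using Real.hasDerivAt_log (ne_of_gt hx0)
      exact hlog.sub (hnum.div hden' hden)
    · norm_num
    · intro x hx
      simp only [Set.mem_Ici] at hx
      have hx0 : (0:ℝ) < x := lt_of_lt_of_le one_pos hx
      rw [sub_nonneg, div_le_div_iff₀ (by positivity) hx0]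
      have hpos : 0 ≤ (x-1)^4 := by positivity
      nlinarith [hpos]
  have heq : 3*(t^2-1)/(t^2+4*t+1) = (3*t^2-3)/(t^2+4*t+1) := by ring_nf
  rw [heq]
  simp only at key
  linarith [key]

set_option maxHeartbeats 1000000 in
/-- Main polynomial inequality for `1 ≤ t ≤ 4`. -/
lemma poly_main {t w : ℝ} (ht1 : 1 ≤ t) (ht4 : t ≤ 4) (hw : 1 ≤ w)
    (hw2 : 2*t^2*w^2 = t^4+1) :
    (t^4+28*t^3-28*t-1)/(12*t^3+36*t^2+12*t) * (w+1)^3 * (3/4) ≤ (t^6-1)/t^3 := by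
  have ht0 : (0:ℝ) < t := by linarith
  have hw0 : (0:ℝ) < w := by linarith
  have hp : ∀ k : ℕ, 0 ≤ t^k := fun k => pow_nonneg (le_of_lt ht0) k
  have hq : 0 ≤ -1-60*t+650*t^2+3620*t^3+8001*t^4+17560*t^5+21100*t^6+17560*t^7+8001*t^8
      +3620*t^9+650*t^10-60*t^11-t^12 := by
    have h1 : 0 ≤ 650*t^2-60*t-1 := by nlinarith
    have h3 : 0 ≤ t^10*(650-60*t-t^2) := by
      have : 0 ≤ 650-60*t-t^2 := by nlinarith
      positivity
    nlinarith [h1, h3, hp 3, hp 4, hp 5, hp 6, hp 7, hp 8, hp 9]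
  have hR : 0 ≤ 32*(t^2+3*t+1)*(t^4+t^2+1) - (t^2+28*t+1)*(3*t^4+2*t^2+3) := by
    nlinarith [hp 1, hp 2, hp 3, hp 4, hp 5, hp 6]
  have hQ : ((t^2+28*t+1)*(t^4+6*t^2+1))^2*(t^4+1)
      ≤ 2*t^2*(32*(t^2+3*t+1)*(t^4+t^2+1) - (t^2+28*t+1)*(3*t^4+2*t^2+3))^2 := by
    have hid : 2*t^2*(32*(t^2+3*t+1)*(t^4+t^2+1) - (t^2+28*t+1)*(3*t^4+2*t^2+3))^2
        - ((t^2+28*t+1)*(t^4+6*t^2+1))^2*(t^4+1)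
        = (t-1)^4*(-1-60*t+650*t^2+3620*t^3+8001*t^4+17560*t^5+21100*t^6+17560*t^7+8001*t^8
          +3620*t^9+650*t^10-60*t^11-t^12) := by ring
    nlinarith [mul_nonneg (pow_nonneg (by linarith : (0:ℝ) ≤ t-1) 4) hq]
  have hS : 0 ≤ (t^2+28*t+1)*(t^4+6*t^2+1) := by positivity
  have hSwR : (t^2+28*t+1)*(t^4+6*t^2+1)*w
      ≤ 32*(t^2+3*t+1)*(t^4+t^2+1) - (t^2+28*t+1)*(3*t^4+2*t^2+3) := by
    have hsq : ((t^2+28*t+1)*(t^4+6*t^2+1)*w)^2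
        ≤ (32*(t^2+3*t+1)*(t^4+t^2+1) - (t^2+28*t+1)*(3*t^4+2*t^2+3))^2 := by
      have h2 : ((t^2+28*t+1)*(t^4+6*t^2+1)*w)^2*(2*t^2)
          = ((t^2+28*t+1)*(t^4+6*t^2+1))^2*(t^4+1) := by
        linear_combination ((t^2+28*t+1)*(t^4+6*t^2+1))^2*hw2
      have h4 : ((t^2+28*t+1)*(t^4+6*t^2+1)*w)^2*(2*t^2)
          ≤ (32*(t^2+3*t+1)*(t^4+t^2+1) - (t^2+28*t+1)*(3*t^4+2*t^2+3))^2*(2*t^2) := by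
        linarith [hQ]
      exact le_of_mul_le_mul_right h4 (by positivity)
    nlinarith [mul_nonneg hS (le_of_lt hw0), hR, hsq]
  have hexp : (w+1)^3*(2*t^2) = (t^4+6*t^2+1)*w + (3*t^4+2*t^2+3) := by
    linear_combination (w+3)*hw2
  have key1 : (t^2+28*t+1)*((w+1)^3*(2*t^2)) ≤ 32*(t^2+3*t+1)*(t^4+t^2+1) := by
    rw [hexp]; nlinarith [hSwR]
  have key2 : (t^2-1)*((t^2+28*t+1)*((w+1)^3*(2*t^2)))
      ≤ (t^2-1)*(32*(t^2+3*t+1)*(t^4+t^2+1)) := by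
    have : (0:ℝ) ≤ t^2-1 := by nlinarith
    exact mul_le_mul_of_nonneg_left key1 this
  have key3 := mul_le_mul_of_nonneg_left key2 (by linarith : (0:ℝ) ≤ 3*t/8)
  rw [div_mul_eq_mul_div, div_mul_eq_mul_div, div_le_div_iff₀ (by positivity) (by positivity)]
  nlinarith [key3]

lemma brk_nonneg {t : ℝ} (ht : 4 ≤ t) :
    0 ≤ 2*(707/500)*t^2*(t^6-1) - (t^4+1)*(2*t^4+1) := by
  have h : 2*(707/500)*t^2*(t^6-1) - (t^4+1)*(2*t^4+1)
      = (1336239/25) + (13467124/125)*(t-4) + (23667709/250)*(t-4)^2 + (5929104/125)*(t-4)^3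
        + (370869/25)*(t-4)^4 + (370944/125)*(t-4)^5 + (46368/125)*(t-4)^6
        + (3312/125)*(t-4)^7 + (207/250)*(t-4)^8 := by ring
  have hr : (0:ℝ) ≤ t - 4 := by linarith
  rw [h]
  have h2 := pow_nonneg hr 2
  have h3 := pow_nonneg hr 3
  have h4 := pow_nonneg hr 4
  have h5 := pow_nonneg hr 5
  have h6 := pow_nonneg hr 6
  have h7 := pow_nonneg hr 7
  have h8 := pow_nonneg hr 8
  positivity

set_option maxHeartbeats 1000000 in
lemma tail_poly {t : ℝ} (ht : 4 ≤ t) :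
    (6931471808/10^10) * ((707:ℝ)/500) * (t^2*(t^6-1)*(t^2+4*t+1))
      ≤ 3*(t^2-1)*(2*(707/500)*t^2*(t^6-1) - (t^4+1)*(2*t^4+1)) := by
  have hr : (0:ℝ) ≤ t - 4 := by linarith
  have hid : 3*(t^2-1)*(2*(707/500)*t^2*(t^6-1) - (t^4+1)*(2*t^4+1))
      - (6931471808/10^10) * ((707:ℝ)/500) * (t^2*(t^6-1)*(t^2+4*t+1))
      = (279370426433517/976562500) + (10949866116881949/9765625000)*(t-4)
        + (132119308295640789/78125000000)*(t-4)^2 + (5459950511814693/3906250000)*(t-4)^3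
        + (2260998932188557/3125000000)*(t-4)^4 + (303938817677584/1220703125)*(t-4)^5
        + (71059461761768/1220703125)*(t-4)^6 + (22414182377123/2441406250)*(t-4)^7
        + (14659386745183/15625000000)*(t-4)^8 + (1098342871081/19531250000)*(t-4)^9
        + (117491397371/78125000000)*(t-4)^10 := by ring
  nlinarith [pow_nonneg hr 2, pow_nonneg hr 3, pow_nonneg hr 4, pow_nonneg hr 5,
    pow_nonneg hr 6, pow_nonneg hr 7, pow_nonneg hr 8, pow_nonneg hr 9, pow_nonneg hr 10, hid]

set_option maxHeartbeats 1000000 in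
lemma tail_main {t w : ℝ} (ht : 4 ≤ t) (hw0 : 0 ≤ w) (hw2 : 2*t^2*w^2 = t^4+1) :
    4*Real.log t * ((t^4+1)/(2*t^2)*w - 1) ≤ (2*Real.log t - Real.log 2) * ((t^6-1)/t^3) := by
  have ht1 : (1:ℝ) ≤ t := by linarith
  have ht0 : (0:ℝ) < t := by linarith
  have hlogt : 0 < Real.log t := Real.log_pos (by linarith)
  -- w ≤ W(t)
  have hwW : w ≤ 250*(2*t^4+1)/(707*t^3) := by
    have hW0 : (0:ℝ) < 250*(2*t^4+1)/(707*t^3) := by positivity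
    have hw2' : w^2*(707*t^3)^2*2 = 499849*t^4*(t^4+1) := by
      linear_combination (499849*t^4)*hw2
    have hsq : w^2 ≤ (250*(2*t^4+1)/(707*t^3))^2 := by
      rw [div_pow, le_div_iff₀ (by positivity)]
      nlinarith [hw2', pow_nonneg (le_of_lt ht0) 8, pow_nonneg (le_of_lt ht0) 4]
    nlinarith [hsq, hW0, hw0]
  have hc0 : (0:ℝ) < (t^4+1)/(2*t^2) := by positivity
  have h2t : (16:ℝ) ≤ t^2 := by nlinarith
  have h4t : (256:ℝ) ≤ t^4 := by nlinarith
  have h6t : (4096:ℝ) ≤ t^6 := by nlinarith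
  have hD0 : (0:ℝ) < (t^6-1)/t^3 := by
    apply div_pos (by nlinarith) (by positivity)
  -- main estimate with W in place of w
  have hmain : 4*Real.log t * ((t^4+1)/(2*t^2)*(250*(2*t^4+1)/(707*t^3)))
      ≤ (2*Real.log t - Real.log 2) * ((t^6-1)/t^3) := by
    have hb := brk_nonneg ht
    have e1 : 2*((t^6-1)/t^3) - 4*((t^4+1)/(2*t^2)*(250*(2*t^4+1)/(707*t^3)))
        = (500*(2*(707/500)*t^2*(t^6-1) - (t^4+1)*(2*t^4+1)))/(707*t^5) := by
      field_simp; ring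
    have e1pos : 0 ≤ 2*((t^6-1)/t^3) - 4*((t^4+1)/(2*t^2)*(250*(2*t^4+1)/(707*t^3))) := by
      rw [e1]; apply div_nonneg (by linarith) (by positivity)
    have hGle : 3*(t^2-1)/(t^2+4*t+1) ≤ Real.log t := gauss_le_log ht1
    have hG0 : 0 ≤ 3*(t^2-1)/(t^2+4*t+1) := by
      apply div_nonneg (by nlinarith) (by positivity)
    have step1 : Real.log 2 * ((t^6-1)/t^3) ≤ (6931471808/10^10) * ((t^6-1)/t^3) := by
      apply mul_le_mul_of_nonneg_right _ (le_of_lt hD0)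
      have := Real.log_two_lt_d9
      norm_num at this ⊢
      linarith
    have step2 : (6931471808/10^10) * ((t^6-1)/t^3)
        ≤ (3*(t^2-1)/(t^2+4*t+1)) * ((500*(2*(707/500)*t^2*(t^6-1) - (t^4+1)*(2*t^4+1)))/(707*t^5)) := by
      have lhs_eq : (6931471808:ℝ)/10^10 * ((t^6-1)/t^3) = 6931471808*(t^6-1)/(10^10*t^3) := by
        ring
      rw [lhs_eq, div_mul_div_comm, div_le_div_iff₀ (by positivity) (by positivity)]
      nlinarith [mul_le_mul_of_nonneg_right (tail_poly ht)
        (by positivity : (0:ℝ) ≤ 500*10^10*t^3)]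
    have step3 : (3*(t^2-1)/(t^2+4*t+1)) * ((500*(2*(707/500)*t^2*(t^6-1) - (t^4+1)*(2*t^4+1)))/(707*t^5))
        ≤ Real.log t * (2*((t^6-1)/t^3) - 4*((t^4+1)/(2*t^2)*(250*(2*t^4+1)/(707*t^3)))) := by
      rw [e1]
      apply mul_le_mul_of_nonneg_right hGle
      apply div_nonneg (by linarith) (by positivity)
    nlinarith [step1, step2, step3]
  have hle : (t^4+1)/(2*t^2)*w ≤ (t^4+1)/(2*t^2)*(250*(2*t^4+1)/(707*t^3)) :=
    mul_le_mul_of_nonneg_left hwW (le_of_lt hc0)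
  nlinarith [hmain, hle, hlogt]

lemma Lmean_self (x : ℝ) : Lmean x x = x := if_pos rfl

lemma Lmean_of_ne {x y : ℝ} (h : x ≠ y) : Lmean x y = (x - y) / Real.log (x / y) := if_neg h

lemma Lmean_symm {x y : ℝ} (hx : 0 < x) (hy : 0 < y) : Lmean x y = Lmean y x := by
  rcases eq_or_ne x y with h | h
  · rw [h]
  · rw [Lmean_of_ne h, Lmean_of_ne h.symm]
    have : y / x = (x / y)⁻¹ := by rw [inv_div]
    rw [this, Real.log_inv]
    rw [div_neg, ← neg_div, neg_sub]

lemma le_Lmean {x y : ℝ} (hy : 0 < y) (hxy : y ≤ x) : y ≤ Lmean x y := by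
  rcases eq_or_lt_of_le hxy with h | h
  · rw [← h, Lmean_self]
  · rw [Lmean_of_ne (ne_of_gt h)]
    have hx : 0 < x := lt_trans hy h
    have hr : 1 < x / y := (one_lt_div hy).mpr h
    have hlog : 0 < Real.log (x/y) := Real.log_pos hr
    rw [le_div_iff₀ hlog]
    have h1 : Real.log (x/y) ≤ x/y - 1 := Real.log_le_sub_one_of_pos (by positivity)
    have h2 : y * (x/y - 1) = x - y := by field_simp
    nlinarith [mul_le_mul_of_nonneg_left h1 (le_of_lt hy)]

lemma Lmean_le {x y : ℝ} (hy : 0 < y) (hxy : y ≤ x) : Lmean x y ≤ x := by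
  rcases eq_or_lt_of_le hxy with h | h
  · rw [← h, Lmean_self]
  · rw [Lmean_of_ne (ne_of_gt h)]
    have hx : 0 < x := lt_trans hy h
    have hr : 1 < x / y := (one_lt_div hy).mpr h
    have hlog : 0 < Real.log (x/y) := Real.log_pos hr
    rw [div_le_iff₀ hlog]
    have h1 : Real.log (y/x) ≤ y/x - 1 := Real.log_le_sub_one_of_pos (by positivity)
    have h3 : Real.log (y/x) = - Real.log (x/y) := by
      rw [show y/x = (x/y)⁻¹ by rw [inv_div], Real.log_inv]
    rw [h3] at h1
    have h2 : x * (1 - y/x) = x - y := by field_simp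
    nlinarith [mul_le_mul_of_nonneg_left h1 (le_of_lt hx)]

lemma Lmean_hom {k x y : ℝ} (hk : 0 < k) (hx : 0 < x) (hy : 0 < y) :
    Lmean (k*x) (k*y) = k * Lmean x y := by
  rcases eq_or_ne x y with h | h
  · rw [h, Lmean_self, Lmean_self]
  · have h' : k*x ≠ k*y := by
      intro hc; exact h (mul_left_cancel₀ (ne_of_gt hk) hc)
    rw [Lmean_of_ne h, Lmean_of_ne h']
    have : k*x/(k*y) = x/y := by
      rw [mul_div_mul_left _ _ (ne_of_gt hk)]
    rw [this]
    ring

/-- The central inequality in one variable. -/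
lemma core_ineq {t : ℝ} (ht : 1 < t) :
    4 * Real.log t * (((t^4+1)/(2*t^2)) * Real.sqrt ((t^4+1)/(2*t^2)) - 1)
      ≤ Real.log ((t^4+1)/(2*t^2)) * ((t^6-1)/t^3) := by
  have ht0 : (0:ℝ) < t := by linarith
  set c : ℝ := (t^4+1)/(2*t^2) with hc_def
  have hc0 : 0 < c := by positivity
  have hc1 : 1 < c := by
    rw [hc_def, lt_div_iff₀ (by positivity)]
    have h1 : (1:ℝ) < t^2 := by nlinarith
    nlinarith [mul_pos (sub_pos.mpr h1) (sub_pos.mpr h1)]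
  set w : ℝ := Real.sqrt c with hw_def
  have hw2c : w^2 = c := Real.sq_sqrt (le_of_lt hc0)
  have hw1 : 1 ≤ w := by
    rw [hw_def]
    rw [show (1:ℝ) = Real.sqrt 1 by rw [Real.sqrt_one]]
    exact Real.sqrt_le_sqrt (le_of_lt hc1)
  have hw0 : 0 < w := by linarith
  have hw2 : 2*t^2*w^2 = t^4+1 := by
    rw [hw2c, hc_def]; field_simp
  have hlogt : 0 < Real.log t := Real.log_pos ht
  have hlogc : 0 < Real.log c := Real.log_pos hc1
  have hcw : c * w = w^3 := by rw [← hw2c]; ring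
  rcases le_total t 4 with ht4 | ht4
  · -- Lin + Lobatto + polynomial
    have hlin := lin_log hw1
    have hlogw : Real.log w = Real.log c / 2 := by
      rw [hw_def, Real.log_sqrt (le_of_lt hc0)]
    rw [hlogw] at hlin
    have hA : w^3 - 1 ≤ (3/16) * Real.log c * (w+1)^3 := by
      rw [div_le_iff₀ (by positivity)] at hlin
      nlinarith [hlin]
    have hpoly := poly_main (le_of_lt ht) ht4 hw1 hw2
    have hlob := log_le_lobatto (le_of_lt ht)
    have hBle : (3/4) * Real.log t * (w+1)^3 ≤ (t^6-1)/t^3 := by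
      have h1 : (3/4) * Real.log t * (w+1)^3
          ≤ (3/4) * ((t^4+28*t^3-28*t-1)/(12*t^3+36*t^2+12*t)) * (w+1)^3 := by
        have hw3 : (0:ℝ) ≤ (w+1)^3 := by positivity
        nlinarith [mul_le_mul_of_nonneg_right hlob hw3]
      calc (3/4) * Real.log t * (w+1)^3
          ≤ (3/4) * ((t^4+28*t^3-28*t-1)/(12*t^3+36*t^2+12*t)) * (w+1)^3 := h1
        _ ≤ (t^6-1)/t^3 := by nlinarith [hpoly]
    rw [hcw]
    calc 4 * Real.log t * (w^3 - 1)
        ≤ 4 * Real.log t * ((3/16) * Real.log c * (w+1)^3) := by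
          apply mul_le_mul_of_nonneg_left hA (by positivity)
      _ = Real.log c * ((3/4) * Real.log t * (w+1)^3) := by ring
      _ ≤ Real.log c * ((t^6-1)/t^3) := by
          apply mul_le_mul_of_nonneg_left hBle (le_of_lt hlogc)
  · -- tail
    have htail := tail_main ht4 (le_of_lt hw0) hw2
    have hD0 : (0:ℝ) ≤ (t^6-1)/t^3 := by
      apply div_nonneg _ (by positivity)
      have h2 : (16:ℝ) ≤ t^2 := by nlinarith
      have h4 : (256:ℝ) ≤ t^4 := by nlinarith
      nlinarith [mul_le_mul_of_nonneg_left h2 (by linarith : (0:ℝ) ≤ t^4)]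
    have hlc : 2*Real.log t - Real.log 2 ≤ Real.log c := by
      have h1 : t^2/2 ≤ c := by
        rw [hc_def, div_le_div_iff₀ (by norm_num) (by positivity)]
        nlinarith
      have h2 : Real.log (t^2/2) = 2*Real.log t - Real.log 2 := by
        rw [Real.log_div (by positivity) (by norm_num), Real.log_pow]
        push_cast; ring
      calc 2*Real.log t - Real.log 2 = Real.log (t^2/2) := h2.symm
        _ ≤ Real.log c := Real.log_le_log (by positivity) h1
    calc 4 * Real.log t * (c * w - 1)
        ≤ (2*Real.log t - Real.log 2) * ((t^6-1)/t^3) := htail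
      _ ≤ Real.log c * ((t^6-1)/t^3) := mul_le_mul_of_nonneg_right hlc hD0

lemma core_L {t : ℝ} (ht : 1 < t) :
    Lmean (((t^4+1)/(2*t^2)) ^ ((3:ℝ)/2)) 1 ≤ Lmean (t^3) ((t^3)⁻¹) := by
  have ht0 : (0:ℝ) < t := by linarith
  set c : ℝ := (t^4+1)/(2*t^2) with hc_def
  have hc0 : 0 < c := by positivity
  have hc1 : 1 < c := by
    rw [hc_def, lt_div_iff₀ (by positivity)]
    have h1 : (1:ℝ) < t^2 := by nlinarith
    nlinarith [mul_pos (sub_pos.mpr h1) (sub_pos.mpr h1)]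
  have ht3 : (1:ℝ) < t^3 := by nlinarith
  have ht3i : (t^3)⁻¹ < 1 := by
    rw [inv_lt_one_iff₀]; right; exact ht3
  have hne1 : c ^ ((3:ℝ)/2) ≠ 1 := by
    have : 1 < c ^ ((3:ℝ)/2) := by
      rw [Real.one_lt_rpow_iff_of_pos hc0]; left; exact ⟨hc1, by norm_num⟩
    exact ne_of_gt this
  have hne2 : t^3 ≠ (t^3)⁻¹ := by
    intro h; rw [← h] at ht3i; linarith
  rw [Lmean_of_ne hne1, Lmean_of_ne hne2]
  have hlog1 : Real.log (c ^ ((3:ℝ)/2) / 1) = (3/2) * Real.log c := by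
    rw [div_one, Real.log_rpow hc0]
  have hlog2 : Real.log (t^3 / (t^3)⁻¹) = 6 * Real.log t := by
    have hd : t^3 / (t^3)⁻¹ = t^6 := by
      field_simp
    rw [hd, Real.log_pow]
    push_cast; ring
  rw [hlog1, hlog2]
  have hc32 : c ^ ((3:ℝ)/2) = c * Real.sqrt c := by
    rw [Real.sqrt_eq_rpow, show ((3:ℝ)/2) = 1 + 1/2 by norm_num, Real.rpow_add hc0,
      Real.rpow_one]
  have hlogc : 0 < Real.log c := Real.log_pos hc1
  have hlogt : 0 < Real.log t := Real.log_pos ht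
  rw [hc32, div_le_div_iff₀ (by positivity) (by positivity)]
  have hD : t^3 - (t^3)⁻¹ = (t^6-1)/t^3 := by
    field_simp
  rw [hD]
  nlinarith [core_ineq ht]

/-- One AGM step decreases the (3/2)-logarithmic mean: ordered version. -/
lemma key_step {x y : ℝ} (hy : 0 < y) (hxy : y ≤ x) :
    Lmean (((x+y)/2) ^ ((3:ℝ)/2)) (Real.sqrt (x*y) ^ ((3:ℝ)/2))
      ≤ Lmean (x ^ ((3:ℝ)/2)) (y ^ ((3:ℝ)/2)) := by
  have hx : 0 < x := lt_of_lt_of_le hy hxy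
  rcases eq_or_lt_of_le hxy with h | h
  · rw [← h]
    rw [show (y+y)/2 = y by ring, Real.sqrt_mul_self (le_of_lt hy)]
  · -- y < x
    set g : ℝ := Real.sqrt (x*y) with hg_def
    have hg0 : 0 < g := Real.sqrt_pos.mpr (by positivity)
    have hg2 : g^2 = x*y := Real.sq_sqrt (by positivity)
    set r : ℝ := x/y with hr_def
    have hr1 : 1 < r := (one_lt_div hy).mpr h
    set t : ℝ := Real.sqrt (Real.sqrt r) with ht_def
    have hsr1 : 1 < Real.sqrt r := by
      rw [show (1:ℝ) = Real.sqrt 1 by rw [Real.sqrt_one]]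
      exact (Real.sqrt_lt_sqrt (by norm_num) hr1)
    have ht1 : 1 < t := by
      rw [ht_def, show (1:ℝ) = Real.sqrt 1 by rw [Real.sqrt_one]]
      exact (Real.sqrt_lt_sqrt (by norm_num) hsr1)
    have ht0 : 0 < t := by linarith
    have ht2 : t^2 = Real.sqrt r := Real.sq_sqrt (Real.sqrt_nonneg r)
    have hgx : g * t^2 = x := by
      rw [ht2, hg_def, hr_def, ← Real.sqrt_mul (by positivity) (x/y)]
      rw [show x*y*(x/y) = x^2 by field_simp]
      exact Real.sqrt_sq (le_of_lt hx)
    have hy_eq : y = g / t^2 := by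
      have h1 : g^2 = g*t^2*y := by rw [hgx]; exact hg2
      have h4 : g * (t^2 * y) = g * g := by linear_combination - h1
      have h5 : t^2 * y = g := mul_left_cancel₀ (ne_of_gt hg0) h4
      rw [eq_div_iff (by positivity : (t:ℝ)^2 ≠ 0)]
      linear_combination h5
    have hx_eq : x = g * t^2 := hgx.symm
    have hA_eq : (x+y)/2 = g * ((t^4+1)/(2*t^2)) := by
      rw [hx_eq, hy_eq]; field_simp
    have ht2_32 : (t^2) ^ ((3:ℝ)/2) = t^3 := by
      rw [← Real.rpow_natCast t 2, ← Real.rpow_mul (le_of_lt ht0),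
        show ((2:ℕ):ℝ) * ((3:ℝ)/2) = ((3:ℕ):ℝ) by push_cast; norm_num,
        Real.rpow_natCast]
    have hxr : x ^ ((3:ℝ)/2) = g ^ ((3:ℝ)/2) * t^3 := by
      rw [hx_eq, Real.mul_rpow (le_of_lt hg0) (by positivity), ht2_32]
    have hyr : y ^ ((3:ℝ)/2) = g ^ ((3:ℝ)/2) * (t^3)⁻¹ := by
      rw [hy_eq, Real.div_rpow (le_of_lt hg0) (by positivity), ht2_32, div_eq_mul_inv]
    have hAr : ((x+y)/2) ^ ((3:ℝ)/2) = g ^ ((3:ℝ)/2) * ((t^4+1)/(2*t^2)) ^ ((3:ℝ)/2) := by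
      rw [hA_eq, Real.mul_rpow (le_of_lt hg0) (by positivity)]
    have hg32 : 0 < g ^ ((3:ℝ)/2) := Real.rpow_pos_of_pos hg0 _
    have hc0 : (0:ℝ) < (t^4+1)/(2*t^2) := by positivity
    have hc32 : (0:ℝ) < ((t^4+1)/(2*t^2)) ^ ((3:ℝ)/2) := Real.rpow_pos_of_pos hc0 _
    rw [hAr, hxr, hyr]
    rw [show Lmean (g ^ ((3:ℝ)/2) * ((t^4+1)/(2*t^2)) ^ ((3:ℝ)/2)) (g ^ ((3:ℝ)/2))
        = Lmean (g ^ ((3:ℝ)/2) * ((t^4+1)/(2*t^2)) ^ ((3:ℝ)/2)) (g ^ ((3:ℝ)/2) * 1) by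
      rw [mul_one]]
    rw [Lmean_hom hg32 hc32 one_pos, Lmean_hom hg32 (by positivity) (by positivity)]
    exact mul_le_mul_of_nonneg_left (core_L ht1) (le_of_lt hg32)

/-- Symmetric version of `key_step`. -/
lemma key_stepSym {x y : ℝ} (hx : 0 < x) (hy : 0 < y) :
    Lmean (((x+y)/2) ^ ((3:ℝ)/2)) (Real.sqrt (x*y) ^ ((3:ℝ)/2))
      ≤ Lmean (x ^ ((3:ℝ)/2)) (y ^ ((3:ℝ)/2)) := by
  rcases le_total y x with h | h
  · exact key_step hy h
  · have h2 := key_step hx h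
    rw [show (y+x)/2 = (x+y)/2 by ring, mul_comm y x] at h2
    calc Lmean (((x+y)/2) ^ ((3:ℝ)/2)) (Real.sqrt (x*y) ^ ((3:ℝ)/2))
        ≤ Lmean (y ^ ((3:ℝ)/2)) (x ^ ((3:ℝ)/2)) := h2
      _ = Lmean (x ^ ((3:ℝ)/2)) (y ^ ((3:ℝ)/2)) :=
          Lmean_symm (Real.rpow_pos_of_pos hy _) (Real.rpow_pos_of_pos hx _)


theorem agm_le_L32 (x y : ℝ) (hx : 0 < x) (hy : 0 < y) :
    AG x y ≤ (Lmean (x ^ ((3:ℝ)/2)) (y ^ ((3:ℝ)/2))) ^ ((2:ℝ)/3) := by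
  set A : ℕ → ℝ := fun n => (agmSeq x y n).1 with hA_def
  set B : ℕ → ℝ := fun n => (agmSeq x y n).2 with hB_def
  have hstep1 : ∀ n, A (n+1) = (A n + B n)/2 := fun n => rfl
  have hstep2 : ∀ n, B (n+1) = Real.sqrt (A n * B n) := fun n => rfl
  have hA0 : A 0 = x := rfl
  have hB0 : B 0 = y := rfl
  -- positivity
  have hpos : ∀ n, 0 < A n ∧ 0 < B n := by
    intro n
    induction n with
    | zero => exact ⟨hx, hy⟩
    | succ n ih =>
      constructor
      · rw [hstep1]; linarith [ih.1, ih.2]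
      · rw [hstep2]; exact Real.sqrt_pos.mpr (mul_pos ih.1 ih.2)
  -- ordering from step 1 on
  have hord : ∀ n, B (n+1) ≤ A (n+1) := by
    intro n
    rw [hstep1, hstep2]
    have ha := (hpos n).1
    have hb := (hpos n).2
    rw [Real.sqrt_mul (le_of_lt ha)]
    nlinarith [two_mul_le_add_sq (Real.sqrt (A n)) (Real.sqrt (B n)),
      Real.sq_sqrt (le_of_lt ha), Real.sq_sqrt (le_of_lt hb),
      Real.sqrt_nonneg (A n), Real.sqrt_nonneg (B n)]
  -- A decreasing, B increasing (from step 1)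
  have hAmono : ∀ n, A (n+2) ≤ A (n+1) := by
    intro n
    rw [hstep1 (n+1)]
    linarith [hord n]
  have hBmono : ∀ n, B (n+1) ≤ B (n+2) := by
    intro n
    rw [hstep2 (n+1)]
    have hb := (hpos (n+1)).2
    calc B (n+1) = Real.sqrt (B (n+1) * B (n+1)) := by
          rw [Real.sqrt_mul_self (le_of_lt hb)]
      _ ≤ Real.sqrt (A (n+1) * B (n+1)) := by
          apply Real.sqrt_le_sqrt
          exact mul_le_mul_of_nonneg_right (hord n) (le_of_lt hb)
  have hA_anti : Antitone (fun n => A (n+1)) := antitone_nat_of_succ_le hAmono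
  have hB_mono : Monotone (fun n => B (n+1)) := monotone_nat_of_le_succ hBmono
  have hBleA : ∀ n m, B (n+1) ≤ A (m+1) := by
    intro n m
    rcases le_total n m with h | h
    · exact le_trans (hB_mono h) (hord m)
    · exact le_trans (hord n) (hA_anti h)
  -- the limit
  set L : ℝ := ⨅ n, A (n+1) with hL_def
  have hbdd : BddBelow (Set.range (fun n => A (n+1))) := by
    refine ⟨B 1, ?_⟩
    rintro z ⟨m, rfl⟩
    exact hBleA 0 m
  have hA'_tend : Tendsto (fun n => A (n+1)) atTop (𝓝 L) :=
    tendsto_atTop_ciInf hA_anti hbdd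
  have hA_tend : Tendsto A atTop (𝓝 L) := (tendsto_add_atTop_iff_nat 1).mp hA'_tend
  -- gap goes to zero
  have hgap_half : ∀ n, A (n+2) - B (n+2) ≤ (A (n+1) - B (n+1))/2 := by
    intro n
    rw [hstep1 (n+1)]
    linarith [hBmono n]
  have hgap_geo : ∀ n, A (n+1) - B (n+1) ≤ (A 1 - B 1) * (1/2)^n := by
    intro n
    induction n with
    | zero => simp
    | succ n ih =>
      calc A (n+2) - B (n+2) ≤ (A (n+1) - B (n+1))/2 := hgap_half n
        _ ≤ ((A 1 - B 1) * (1/2)^n)/2 := by linarith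
        _ = (A 1 - B 1) * (1/2)^(n+1) := by ring
  have hgap0 : Tendsto (fun n => A (n+1) - B (n+1)) atTop (𝓝 0) := by
    apply squeeze_zero (fun n => by linarith [hord n]) (fun n => hgap_geo n)
    have h2 : Tendsto (fun n : ℕ => (A 1 - B 1) * (1/2)^n) atTop (𝓝 ((A 1 - B 1) * 0)) :=
      (tendsto_pow_atTop_nhds_zero_of_lt_one (by norm_num) (by norm_num)).const_mul _
    simpa using h2
  have hB'_tend : Tendsto (fun n => B (n+1)) atTop (𝓝 L) := by
    have h := hA'_tend.sub hgap0
    rw [sub_zero] at h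
    have heq : (fun n => A (n+1) - (A (n+1) - B (n+1))) = fun n => B (n+1) := by
      funext n; ring
    rwa [heq] at h
  -- the decreasing L-mean chain
  have hLstep : ∀ n, Lmean ((A (n+1)) ^ ((3:ℝ)/2)) ((B (n+1)) ^ ((3:ℝ)/2))
      ≤ Lmean ((A n) ^ ((3:ℝ)/2)) ((B n) ^ ((3:ℝ)/2)) := by
    intro n
    rw [hstep1 n, hstep2 n]
    exact key_stepSym (hpos n).1 (hpos n).2
  have hLchain : ∀ n, Lmean ((A n) ^ ((3:ℝ)/2)) ((B n) ^ ((3:ℝ)/2))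
      ≤ Lmean ((A 0) ^ ((3:ℝ)/2)) ((B 0) ^ ((3:ℝ)/2)) := by
    intro n
    induction n with
    | zero => exact le_refl _
    | succ n ih => exact le_trans (hLstep n) ih
  -- sandwich for n ≥ 1
  have h32 : (0:ℝ) ≤ (3:ℝ)/2 := by norm_num
  have h23 : (0:ℝ) ≤ (2:ℝ)/3 := by norm_num
  have hrpow_inv : ∀ z : ℝ, 0 ≤ z → (z ^ ((3:ℝ)/2)) ^ ((2:ℝ)/3) = z := by
    intro z hz
    rw [← Real.rpow_mul hz]
    norm_num
  have hord32 : ∀ n, (B (n+1)) ^ ((3:ℝ)/2) ≤ (A (n+1)) ^ ((3:ℝ)/2) := fun n =>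
    Real.rpow_le_rpow (le_of_lt (hpos (n+1)).2) (hord n) h32
  have hBpos32 : ∀ n, 0 < (B (n+1)) ^ ((3:ℝ)/2) := fun n =>
    Real.rpow_pos_of_pos (hpos (n+1)).2 _
  have hlow : ∀ n, B (n+1)
      ≤ (Lmean ((A (n+1)) ^ ((3:ℝ)/2)) ((B (n+1)) ^ ((3:ℝ)/2))) ^ ((2:ℝ)/3) := by
    intro n
    have h1 := le_Lmean (hBpos32 n) (hord32 n)
    have h2 := Real.rpow_le_rpow (le_of_lt (hBpos32 n)) h1 h23
    rwa [hrpow_inv _ (le_of_lt (hpos (n+1)).2)] at h2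
  have hhigh : ∀ n, (Lmean ((A (n+1)) ^ ((3:ℝ)/2)) ((B (n+1)) ^ ((3:ℝ)/2))) ^ ((2:ℝ)/3)
      ≤ A (n+1) := by
    intro n
    have hLnn : 0 ≤ Lmean ((A (n+1)) ^ ((3:ℝ)/2)) ((B (n+1)) ^ ((3:ℝ)/2)) :=
      le_trans (le_of_lt (hBpos32 n)) (le_Lmean (hBpos32 n) (hord32 n))
    have h1 := Lmean_le (hBpos32 n) (hord32 n)
    have h2 := Real.rpow_le_rpow hLnn h1 h23
    rwa [hrpow_inv _ (le_of_lt (hpos (n+1)).1)] at h2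
  -- M (n+1) tends to L
  have hM_tend : Tendsto
      (fun n => (Lmean ((A (n+1)) ^ ((3:ℝ)/2)) ((B (n+1)) ^ ((3:ℝ)/2))) ^ ((2:ℝ)/3))
      atTop (𝓝 L) :=
    tendsto_of_tendsto_of_tendsto_of_le_of_le hB'_tend hA'_tend hlow hhigh
  -- conclude
  have hAG : AG x y = L := hA_tend.limUnder_eq
  rw [hAG, ← hA0, ← hB0]
  apply le_of_tendsto hM_tend
  filter_upwards with n
  have hLnn : 0 ≤ Lmean ((A (n+1)) ^ ((3:ℝ)/2)) ((B (n+1)) ^ ((3:ℝ)/2)) :=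
    le_trans (le_of_lt (hBpos32 n)) (le_Lmean (hBpos32 n) (hord32 n))
  exact Real.rpow_le_rpow hLnn (hLchain (n+1)) h23
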